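/- Let $X$ be a Polish space and $P \in \mathcal{P}(X)$. Suppose for each $N\in\mathbb{N}$ the $N$-fold product $P^{\otimes N}$ is concentrated on a closed set $\Gamma_N \subset X^N$. Then there exists a single closed set $\Gamma \subset X$ with $P(\Gamma) = 1$ and $\Gamma^N \subset \Gamma_N$ for all $N\in\mathbb{N}$. -/

import Mathlib

open MeasureTheory Filter Topology

noncomputable section

/-- **Concentration on a single closed set** (used in the proof of Theorem 2.6):
if for every `N` the `N`-fold product `P^{⊗N}` of a probability measure `P` on a
Polish space is concentrated on a closed set `Γ_N ⊆ X^N`, then there is a single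
closed set `Γ ⊆ X` with `P(Γ) = 1` and `Γ^N ⊆ Γ_N` for all `N`. -/
theorem product_concentration_closed {X : Type*}
    [MeasurableSpace X] [TopologicalSpace X] [PolishSpace X] [BorelSpace X]
    (P : Measure X) [IsProbabilityMeasure P]
    (Γn : (N : ℕ) → Set (Fin N → X))
    (hclosed : ∀ N, IsClosed (Γn N))
    (hconc : ∀ N, Measure.pi (fun _ : Fin N => P) (Γn N) = 1) :
    ∃ Γ : Set X, IsClosed Γ ∧ P Γ = 1 ∧
      ∀ N, {g : Fin N → X | ∀ i, g i ∈ Γ} ⊆ Γn N := by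
  classical
  set Γ : Set X := {x | ∀ U ∈ 𝓝 x, P U ≠ 0} with hΓ
  have hΓcopen : IsOpen Γᶜ := by
    rw [isOpen_iff_mem_nhds]
    intro x hx
    simp only [Set.mem_compl_iff, hΓ, Set.mem_setOf_eq, not_forall] at hx
    obtain ⟨U, hU⟩ := hx
    simp only [not_not, exists_prop] at hU
    obtain ⟨hU, hU0⟩ := hU
    obtain ⟨V, hVU, hVopen, hxV⟩ := mem_nhds_iff.1 hU
    refine Filter.mem_of_superset (hVopen.mem_nhds hxV) fun y hy => ?_
    simp only [Set.mem_compl_iff, hΓ, Set.mem_setOf_eq, not_forall]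
    refine ⟨U, ?_⟩
    simp only [not_not, exists_prop]
    exact ⟨Filter.mem_of_superset (hVopen.mem_nhds hy) hVU, hU0⟩
  have hΓclosed : IsClosed Γ := by
    have := hΓcopen.isClosed_compl
    simpa using this
  have hnull : P Γᶜ = 0 := by
    apply measure_null_of_locally_null
    intro x hx
    simp only [Set.mem_compl_iff, hΓ, Set.mem_setOf_eq, not_forall] at hx
    obtain ⟨U, hU⟩ := hx
    simp only [not_not, exists_prop] at hU
    obtain ⟨hU, hU0⟩ := hU
    exact ⟨U, nhdsWithin_le_nhds hU, hU0⟩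
  refine ⟨Γ, hΓclosed, (prob_compl_eq_zero_iff hΓclosed.measurableSet).1 hnull, ?_⟩
  intro N g hg
  by_contra hgn
  have hopen : IsOpen (Γn N)ᶜ := (hclosed N).isOpen_compl
  obtain ⟨I, u, hu, hsub⟩ := (isOpen_pi_iff.1 hopen) g hgn
  set U : Fin N → Set X := fun i => if i ∈ I then u i else Set.univ with hU
  have hbox : (Set.univ : Set (Fin N)).pi U ⊆ (Γn N)ᶜ := by
    refine Set.Subset.trans ?_ hsub
    intro f hf i hi
    have h2 := hf i (Set.mem_univ i)
    simp only [hU] at h2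
    rwa [if_pos (Finset.mem_coe.1 hi)] at h2
  have hmeas0 : Measure.pi (fun _ : Fin N => P) ((Γn N)ᶜ) = 0 :=
    (prob_compl_eq_zero_iff (hclosed N).measurableSet).2 (hconc N)
  have hboxmeas : Measure.pi (fun _ : Fin N => P) ((Set.univ : Set (Fin N)).pi U) = 0 :=
    le_antisymm (hmeas0 ▸ measure_mono hbox) zero_le
  rw [Measure.pi_pi] at hboxmeas
  obtain ⟨i, _, hi0⟩ := Finset.prod_eq_zero_iff.1 hboxmeas
  by_cases hiI : i ∈ I
  · have hgi : g i ∈ Γ := hg i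
    have : P (u i) ≠ 0 :=
      hgi (u i) ((hu i hiI).1.mem_nhds (hu i hiI).2)
    simp only [hU, if_pos hiI] at hi0
    exact this hi0
  · simp only [hU, if_neg hiI, measure_univ] at hi0
    exact one_ne_zero hi0
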